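/- Let A be an n×n Hermitian matrix partitioned in block form as A = [[a, bᵀ],[b, B]], where a is a scalar, b is a column vector of length n-1, and B is an (n-1)×(n-1) Hermitian matrix. Let x be a unit eigenvector of A corresponding to the eigenvalue λ. If λ is not an eigenvalue of B, then |x_1|² = 1/(1 + ‖(λI - B)⁻¹ b‖²), where ‖·‖ is the Euclidean norm and x_1 is the first entry of x. -/

import Mathlib

open Matrix

/-- **Tao–Vu lemma.** Let the Hermitian matrix `A` be partitioned as `A = [[a, b*],[b, B]]`
(top-left scalar `a`, first column below the diagonal `b`, lower-right block `B`), and let `x`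
be a unit eigenvector of `A` corresponding to the eigenvalue `λ`. If `λ` is not an eigenvalue
of `B`, then `|x₁|² = 1 / (1 + ‖(λ I - B)⁻¹ b‖²)`, where `‖·‖` is the Euclidean norm and `x₁`
is the first entry of `x`. -/
theorem stmt6 {m : ℕ} (a : ℂ) (b : Fin m → ℂ) (B : Matrix (Fin m) (Fin m) ℂ)
    (A : Matrix (Unit ⊕ Fin m) (Unit ⊕ Fin m) ℂ)
    (hA : A = Matrix.fromBlocks (fun _ _ => a) (fun _ j => star (b j)) (fun i _ => b i) B)
    (hHerm : A.IsHermitian)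
    (x : Unit ⊕ Fin m → ℂ) (lam : ℂ)
    (heig : A *ᵥ x = lam • x)
    (hx_unit : ∑ i, ‖x i‖ ^ 2 = 1)
    (hlam : ¬ Module.End.HasEigenvalue (Matrix.toLin' B) lam) :
    ‖x (Sum.inl ())‖ ^ 2 =
      1 / (1 + ∑ i, ‖((lam • (1 : Matrix (Fin m) (Fin m) ℂ) - B)⁻¹ *ᵥ b) i‖ ^ 2) := by
  set M : Matrix (Fin m) (Fin m) ℂ := lam • (1 : Matrix (Fin m) (Fin m) ℂ) - B with hM
  set x₁ : ℂ := x (Sum.inl ()) with hx₁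
  set y : Fin m → ℂ := fun i => x (Sum.inr i) with hy
  -- M is invertible
  have hMdet : IsUnit M.det := by
    rw [isUnit_iff_ne_zero]
    intro hdet
    obtain ⟨v, hv0, hv⟩ := Matrix.exists_mulVec_eq_zero_iff.mpr hdet
    apply hlam
    refine Module.End.hasEigenvalue_of_hasEigenvector (x := v) ⟨?_, hv0⟩
    rw [Module.End.mem_eigenspace_iff, Matrix.toLin'_apply]
    have : (lam • (1 : Matrix (Fin m) (Fin m) ℂ)) *ᵥ v - B *ᵥ v = 0 := by
      rw [← Matrix.sub_mulVec]; exact hv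
    rw [Matrix.smul_mulVec, Matrix.one_mulVec] at this
    linear_combination -this
  -- key equation: M *ᵥ y = x₁ • b
  have hkey : M *ᵥ y = x₁ • b := by
    have h2 : ∀ i, (M *ᵥ y) i = lam * y i - ∑ j, B i j * y j := by
      intro i
      rw [hM, Matrix.sub_mulVec, Matrix.smul_mulVec, Matrix.one_mulVec]
      simp [Matrix.mulVec, dotProduct]
    funext i
    have h := congrFun heig (Sum.inr i)
    simp only [hA, Matrix.mulVec, dotProduct, Fintype.sum_sum_type,
      Matrix.fromBlocks_apply₂₁, Matrix.fromBlocks_apply₂₂, Pi.smul_apply,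
      smul_eq_mul, Finset.univ_unique, Finset.sum_singleton] at h
    have h' : b i * x₁ + ∑ j, B i j * y j = lam * y i := h
    rw [h2 i]
    simp only [Pi.smul_apply, smul_eq_mul]
    linear_combination -h'
  have hyx : y = x₁ • (M⁻¹ *ᵥ b) := by
    have h1 : M⁻¹ *ᵥ (M *ᵥ y) = y := by
      rw [Matrix.mulVec_mulVec, Matrix.nonsing_inv_mul M hMdet, Matrix.one_mulVec]
    rw [← h1, hkey, Matrix.mulVec_smul]
  have hsum : ‖x₁‖ ^ 2 + ∑ i, ‖y i‖ ^ 2 = 1 := by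
    rw [← hx_unit, Fintype.sum_sum_type]
    simp [hx₁, hy]
  have hnorm : ∀ i, ‖y i‖ ^ 2 = ‖x₁‖ ^ 2 * ‖(M⁻¹ *ᵥ b) i‖ ^ 2 := by
    intro i
    rw [hyx]
    simp [norm_mul, mul_pow]
  have hS : (0:ℝ) ≤ ∑ i, ‖(M⁻¹ *ᵥ b) i‖ ^ 2 :=
    Finset.sum_nonneg fun i _ => sq_nonneg _
  have heq : ‖x₁‖ ^ 2 * (1 + ∑ i, ‖(M⁻¹ *ᵥ b) i‖ ^ 2) = 1 := by
    rw [mul_add, mul_one, Finset.mul_sum, ← hsum]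
    congr 1
    exact Finset.sum_congr rfl fun i _ => (hnorm i).symm
  have hpos : (0:ℝ) < 1 + ∑ i, ‖(M⁻¹ *ᵥ b) i‖ ^ 2 := by linarith
  rw [eq_div_iff hpos.ne']
  exact heq
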